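/- Let P_n, P : 𝒟̄ → ℝ be continuous, each bounded above by its value at (0,0) plus A, with P_n → P uniformly on 𝒟̄ = [0,1/(2r0²)] × [0,H]. Let z_n → z in [0,H], ρ_n ∈ Argmin Π_{P_n}(·, z_n) with ρ_n → ρ. Then Π_{P_n}(ρ_n, z_n) → Π_P(ρ, z) and ρ ∈ Argmin Π_P(·, z). -/

import Mathlib

open MeasureTheory Filter

/-- `e(s) = r0^4/(1-2 s r0²)²`. -/
noncomputable def eFun (r0 s : ℝ) : ℝ := r0 ^ 4 / (1 - 2 * s * r0 ^ 2) ^ 2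

/-- `Π_Q(ρ,z)`. -/
noncomputable def PiFun (r0 Ω : ℝ) (Q : ℝ × ℝ → ℝ) (ρ z : ℝ) : ℝ :=
  ∫ s in (0 : ℝ)..ρ, (Ω ^ 2 * r0 ^ 2 / (2 * (1 - 2 * s * r0 ^ 2)) - Q (s, z)) * eFun r0 s

/-- `Argmin Π_Q(·,z)` over `[0, 1/(2r0²))`. -/
noncomputable def ArgminPi (r0 Ω : ℝ) (Q : ℝ × ℝ → ℝ) (z : ℝ) : Set ℝ :=
  {ρ ∈ Set.Ico (0 : ℝ) (1 / (2 * r0 ^ 2)) |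
    ∀ ρ' ∈ Set.Ico (0 : ℝ) (1 / (2 * r0 ^ 2)), PiFun r0 Ω Q ρ z ≤ PiFun r0 Ω Q ρ' z}

lemma denom_pos {r0 s : ℝ} (hr0 : 0 < r0) (hs : s < 1 / (2 * r0 ^ 2)) :
    0 < 1 - 2 * s * r0 ^ 2 := by
  have h2 : (0:ℝ) < 2 * r0 ^ 2 := by positivity
  rw [lt_div_iff₀ h2] at hs
  nlinarith

lemma contOn_integrand (r0 Ω H : ℝ) (hr0 : 0 < r0) (Q : ℝ × ℝ → ℝ)
    (hQ : ContinuousOn Q (Set.Icc (0:ℝ) (1/(2*r0^2)) ×ˢ Set.Icc (0:ℝ) H))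
    (w : ℝ) (hw : w ∈ Set.Icc (0:ℝ) H) (M : ℝ) (hM : M < 1/(2*r0^2)) :
    ContinuousOn (fun s => (Ω ^ 2 * r0 ^ 2 / (2 * (1 - 2 * s * r0 ^ 2)) - Q (s, w)) * eFun r0 s)
      (Set.Icc 0 M) := by
  have hden : ∀ s ∈ Set.Icc (0:ℝ) M, 0 < 1 - 2 * s * r0 ^ 2 := fun s hs =>
    denom_pos hr0 (lt_of_le_of_lt hs.2 hM)
  apply ContinuousOn.mul
  · apply ContinuousOn.sub
    · exact ContinuousOn.div continuousOn_const (by fun_prop)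
        (fun s hs => by have := hden s hs; nlinarith)
    · apply hQ.comp (Continuous.continuousOn (by fun_prop) : ContinuousOn (fun s : ℝ => (s, w)) (Set.Icc 0 M))
      intro s hs
      exact Set.mem_prod.mpr ⟨⟨hs.1, le_trans hs.2 hM.le⟩, hw⟩
  · unfold eFun
    exact ContinuousOn.div continuousOn_const (by fun_prop)
      (fun s hs => pow_ne_zero 2 (ne_of_gt (hden s hs)))

lemma antider (r0 Ω B : ℝ) (hr0 : 0 < r0) {s : ℝ} (hs : s < 1/(2*r0^2)) :
    HasDerivAt (fun u : ℝ => Ω^2*r0^4/8 * ((1-2*u*r0^2)^2)⁻¹ - B*r0^2/2 * (1-2*u*r0^2)⁻¹)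
      ((Ω ^ 2 * r0 ^ 2 / (2 * (1 - 2 * s * r0 ^ 2)) - B) * eFun r0 s) s := by
  have ht : 0 < 1 - 2*s*r0^2 := denom_pos hr0 hs
  have h1 : HasDerivAt (fun u : ℝ => 1 - 2*u*r0^2) (-(2*r0^2)) s := by
    have heq : (fun u : ℝ => 1 - 2*u*r0^2) = fun u => (-(2*r0^2))*u + 1 := by
      funext u; ring
    rw [heq]
    simpa using ((hasDerivAt_id s).const_mul (-(2*r0^2))).add_const 1
  have h2 : HasDerivAt (fun u : ℝ => ((1-2*u*r0^2)^2)⁻¹)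
      (-((2:ℕ) * (1-2*s*r0^2)^1 * (-(2*r0^2))) / ((1-2*s*r0^2)^2)^2) s :=
    (h1.pow 2).inv (pow_ne_zero 2 ht.ne')
  have h3 : HasDerivAt (fun u : ℝ => (1-2*u*r0^2)⁻¹)
      (-(-(2*r0^2)) / (1-2*s*r0^2)^2) s := h1.inv ht.ne'
  have h4 := ((h2.const_mul (Ω^2*r0^4/8)).sub (h3.const_mul (B*r0^2/2)))
  refine h4.congr_deriv ?_
  unfold eFun
  push_cast
  generalize 1 - 2*s*r0^2 = t at ht ⊢
  have ht0 := ht.ne'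
  field_simp
  ring

lemma pi_lower (r0 Ω H B : ℝ) (hr0 : 0 < r0) (Q : ℝ × ℝ → ℝ)
    (hQ : ContinuousOn Q (Set.Icc (0:ℝ) (1/(2*r0^2)) ×ˢ Set.Icc (0:ℝ) H))
    (w : ℝ) (hw : w ∈ Set.Icc (0:ℝ) H)
    (hQB : ∀ x ∈ Set.Icc (0:ℝ) (1/(2*r0^2)) ×ˢ Set.Icc (0:ℝ) H, Q x ≤ B)
    (ρ : ℝ) (hρ0 : 0 ≤ ρ) (hρ : ρ < 1/(2*r0^2)) :
    (Ω^2*r0^4/8 * ((1-2*ρ*r0^2)^2)⁻¹ - B*r0^2/2 * (1-2*ρ*r0^2)⁻¹)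
      - (Ω^2*r0^4/8 - B*r0^2/2) ≤ PiFun r0 Ω Q ρ w := by
  have huIcc : Set.uIcc (0:ℝ) ρ = Set.Icc 0 ρ := Set.uIcc_of_le hρ0
  have hBc : ContinuousOn
      (fun s => (Ω ^ 2 * r0 ^ 2 / (2 * (1 - 2 * s * r0 ^ 2)) - (fun _ : ℝ × ℝ => B) (s, w)) * eFun r0 s)
      (Set.Icc 0 ρ) := contOn_integrand r0 Ω H hr0 _ continuousOn_const w hw ρ hρ
  have hQc : ContinuousOn
      (fun s => (Ω ^ 2 * r0 ^ 2 / (2 * (1 - 2 * s * r0 ^ 2)) - Q (s, w)) * eFun r0 s)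
      (Set.Icc 0 ρ) := contOn_integrand r0 Ω H hr0 Q hQ w hw ρ hρ
  have hIntB : IntervalIntegrable
      (fun s => (Ω ^ 2 * r0 ^ 2 / (2 * (1 - 2 * s * r0 ^ 2)) - B) * eFun r0 s) volume 0 ρ := by
    apply ContinuousOn.intervalIntegrable; rw [huIcc]; exact hBc
  have hIntQ : IntervalIntegrable
      (fun s => (Ω ^ 2 * r0 ^ 2 / (2 * (1 - 2 * s * r0 ^ 2)) - Q (s, w)) * eFun r0 s) volume 0 ρ := by
    apply ContinuousOn.intervalIntegrable; rw [huIcc]; exact hQc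
  have heq : (∫ s in (0:ℝ)..ρ, (Ω ^ 2 * r0 ^ 2 / (2 * (1 - 2 * s * r0 ^ 2)) - B) * eFun r0 s)
      = (Ω^2*r0^4/8 * ((1-2*ρ*r0^2)^2)⁻¹ - B*r0^2/2 * (1-2*ρ*r0^2)⁻¹)
        - (Ω^2*r0^4/8 * ((1-2*(0:ℝ)*r0^2)^2)⁻¹ - B*r0^2/2 * (1-2*(0:ℝ)*r0^2)⁻¹) := by
    apply intervalIntegral.integral_eq_sub_of_hasDerivAt
    · intro x hx
      rw [huIcc] at hx
      exact antider r0 Ω B hr0 (lt_of_le_of_lt hx.2 hρ)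
    · exact hIntB
  have hmono : (∫ s in (0:ℝ)..ρ, (Ω ^ 2 * r0 ^ 2 / (2 * (1 - 2 * s * r0 ^ 2)) - B) * eFun r0 s)
      ≤ PiFun r0 Ω Q ρ w := by
    unfold PiFun
    apply intervalIntegral.integral_mono_on hρ0 hIntB hIntQ
    intro s hs
    have hQle : Q (s, w) ≤ B := hQB (s, w)
      (Set.mem_prod.mpr ⟨⟨hs.1, le_trans hs.2 hρ.le⟩, hw⟩)
    have he : 0 ≤ eFun r0 s := by unfold eFun; positivity
    nlinarith
  have h0 : (Ω^2*r0^4/8 * ((1-2*(0:ℝ)*r0^2)^2)⁻¹ - B*r0^2/2 * (1-2*(0:ℝ)*r0^2)⁻¹)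
      = Ω^2*r0^4/8 - B*r0^2/2 := by norm_num
  rw [← h0, ← heq]
  exact hmono

lemma exists_M (r0 Ω B : ℝ) (hr0 : 0 < r0) (hΩ : 0 < Ω) (hB : 0 ≤ B) :
    ∃ M, 0 ≤ M ∧ M < 1/(2*r0^2) ∧ ∀ ρ, M < ρ → ρ < 1/(2*r0^2) →
      0 < (Ω^2*r0^4/8 * ((1-2*ρ*r0^2)^2)⁻¹ - B*r0^2/2 * (1-2*ρ*r0^2)⁻¹)
            - (Ω^2*r0^4/8 - B*r0^2/2) := by
  set C0 : ℝ := B*r0^2 + Ω^2*r0^4/8 + 1 with hC0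
  have hC0pos : 0 < C0 := by positivity
  set t0 : ℝ := min 1 (Ω^2*r0^4/(8*C0)) with ht0
  have ht0pos : 0 < t0 := lt_min one_pos (by positivity)
  have ht0le : t0 ≤ 1 := min_le_left _ _
  refine ⟨(1-t0)/(2*r0^2), div_nonneg (by linarith) (by positivity), ?_, ?_⟩
  · rw [div_lt_div_iff₀ (by positivity) (by positivity)]
    nlinarith [mul_pos ht0pos (by positivity : (0:ℝ) < 2*r0^2)]
  · intro ρ hMρ hρ
    set t : ℝ := 1 - 2*ρ*r0^2 with htdef
    have ht : 0 < t := denom_pos hr0 hρ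
    have htlt : t < t0 := by
      rw [div_lt_iff₀ (by positivity : (0:ℝ) < 2*r0^2)] at hMρ
      nlinarith
    have h8 : t*(8*C0) < Ω^2*r0^4 := by
      have := lt_of_lt_of_le htlt (min_le_right 1 (Ω^2*r0^4/(8*C0)))
      rw [lt_div_iff₀ (by positivity)] at this
      exact this
    rw [hC0] at h8
    clear_value t
    have ht1 : t ≤ 1 := le_trans htlt.le ht0le
    have key : 0 < Ω^2*r0^4/8 - B*r0^2/2*t - (Ω^2*r0^4/8 - B*r0^2/2)*t^2 := by
      nlinarith [mul_le_of_le_one_left ht.le ht1,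
        mul_nonneg (mul_nonneg hB (sq_nonneg r0)) (mul_nonneg ht.le ht.le),
        mul_nonneg (mul_nonneg hB (sq_nonneg r0)) ht.le,
        mul_nonneg (by positivity : (0:ℝ) ≤ Ω^2*r0^4)
          (sub_nonneg.mpr (mul_le_of_le_one_left ht.le ht1))]
    have heq : (Ω^2*r0^4/8 * (t^2)⁻¹ - B*r0^2/2 * t⁻¹) - (Ω^2*r0^4/8 - B*r0^2/2)
        = (Ω^2*r0^4/8 - B*r0^2/2*t - (Ω^2*r0^4/8 - B*r0^2/2)*t^2)/t^2 := by
      field_simp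
    rw [heq]
    positivity

lemma piTendsto (r0 Ω H : ℝ) (hr0 : 0 < r0) (hH : 0 < H)
    (Pn : ℕ → ℝ × ℝ → ℝ) (P : ℝ × ℝ → ℝ)
    (hPnc : ∀ n, ContinuousOn (Pn n) (Set.Icc (0:ℝ) (1/(2*r0^2)) ×ˢ Set.Icc (0:ℝ) H))
    (hPc : ContinuousOn P (Set.Icc (0:ℝ) (1/(2*r0^2)) ×ˢ Set.Icc (0:ℝ) H))
    (hunif : TendstoUniformlyOn (fun n p => Pn n p) P atTop
      (Set.Icc (0:ℝ) (1/(2*r0^2)) ×ˢ Set.Icc (0:ℝ) H))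
    (zn : ℕ → ℝ) (z : ℝ) (hzn : ∀ n, zn n ∈ Set.Icc (0:ℝ) H)
    (hznz : Tendsto zn atTop (nhds z)) (hz : z ∈ Set.Icc (0:ℝ) H)
    (M : ℝ) (hM0 : 0 ≤ M) (hM : M < 1/(2*r0^2))
    (σn : ℕ → ℝ) (σ : ℝ) (hσn : ∀ n, σn n ∈ Set.Icc 0 M)
    (hσ : Tendsto σn atTop (nhds σ)) :
    Tendsto (fun n => PiFun r0 Ω (Pn n) (σn n) (zn n)) atTop (nhds (PiFun r0 Ω P σ z)) := by
  have hσM : σ ∈ Set.Icc (0:ℝ) M :=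
    isClosed_Icc.mem_of_tendsto hσ (Filter.Eventually.of_forall hσn)
  have hcpos : 0 < 1/(2*r0^2) := by positivity
  have hfc : ContinuousOn (fun s => (Ω^2*r0^2/(2*(1-2*s*r0^2)) - P (s, z)) * eFun r0 s)
      (Set.Icc 0 M) := contOn_integrand r0 Ω H hr0 P hPc z hz M hM
  obtain ⟨K, hK⟩ := (isCompact_Icc).exists_bound_of_continuousOn hfc
  set K' := max K 0 with hK'def
  have hK'0 : 0 ≤ K' := le_max_right _ _
  have hK'b : ∀ s ∈ Set.Icc (0:ℝ) M,
      ‖(Ω^2*r0^2/(2*(1-2*s*r0^2)) - P (s, z)) * eFun r0 s‖ ≤ K' :=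
    fun s hs => le_trans (hK s hs) (le_max_left _ _)
  have hMden : 0 < 1 - 2*M*r0^2 := denom_pos hr0 hM
  set E := r0^4/(1-2*M*r0^2)^2 with hEdef
  have hE0 : 0 < E := by positivity
  have hEb : ∀ s ∈ Set.Icc (0:ℝ) M, eFun r0 s ≤ E := by
    intro s hs
    have hs' : 0 < 1 - 2*s*r0^2 := denom_pos hr0 (lt_of_le_of_lt hs.2 hM)
    unfold eFun
    rw [hEdef, div_le_div_iff₀ (by positivity) (by positivity)]
    have hle : 1 - 2*M*r0^2 ≤ 1 - 2*s*r0^2 := by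
      nlinarith [mul_le_mul_of_nonneg_right hs.2 (sq_nonneg r0)]
    nlinarith [pow_le_pow_left₀ hMden.le hle 2, pow_nonneg hr0.le 4,
      mul_le_mul_of_nonneg_left (pow_le_pow_left₀ hMden.le hle 2) (pow_nonneg hr0.le 4)]
  have hDcomp : IsCompact (Set.Icc (0:ℝ) (1/(2*r0^2)) ×ˢ Set.Icc (0:ℝ) H) :=
    (isCompact_Icc).prod isCompact_Icc
  have hucP := hDcomp.uniformContinuousOn_of_continuous hPc
  rw [Metric.uniformContinuousOn_iff] at hucP
  rw [Metric.tendsto_nhds]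
  intro ε hε
  set ε1 := ε / (4*(1/(2*r0^2))*E+4) with hε1def
  have hε1pos : 0 < ε1 := by positivity
  obtain ⟨δ, hδpos, hδ⟩ := hucP ε1 hε1pos
  have hev1 : ∀ᶠ n in atTop,
      ∀ x ∈ Set.Icc (0:ℝ) (1/(2*r0^2)) ×ˢ Set.Icc (0:ℝ) H, dist (P x) (Pn n x) < ε1 :=
    (Metric.tendstoUniformlyOn_iff.mp hunif) ε1 hε1pos
  have hev2 : ∀ᶠ n in atTop, dist (zn n) z < δ := (Metric.tendsto_nhds.mp hznz) δ hδpos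
  have hev3 : ∀ᶠ n in atTop, dist (σn n) σ < ε/(2*(K'+1)) :=
    (Metric.tendsto_nhds.mp hσ) _ (by positivity)
  filter_upwards [hev1, hev2, hev3] with n h1 h2 h3
  have hwH := hzn n
  have hσnM := hσn n
  have hsub1 : Set.Icc (0:ℝ) (σn n) ⊆ Set.Icc (0:ℝ) M := Set.Icc_subset_Icc le_rfl hσnM.2
  have hsubσ : Set.Icc (0:ℝ) σ ⊆ Set.Icc (0:ℝ) M := Set.Icc_subset_Icc le_rfl hσM.2
  have hfnc : ContinuousOn
      (fun s => (Ω^2*r0^2/(2*(1-2*s*r0^2)) - Pn n (s, zn n)) * eFun r0 s)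
      (Set.Icc 0 M) := contOn_integrand r0 Ω H hr0 (Pn n) (hPnc n) (zn n) hwH M hM
  have hIfn : IntervalIntegrable
      (fun s => (Ω^2*r0^2/(2*(1-2*s*r0^2)) - Pn n (s, zn n)) * eFun r0 s) volume 0 (σn n) := by
    apply ContinuousOn.intervalIntegrable
    rw [Set.uIcc_of_le hσnM.1]; exact hfnc.mono hsub1
  have hIf1 : IntervalIntegrable
      (fun s => (Ω^2*r0^2/(2*(1-2*s*r0^2)) - P (s, z)) * eFun r0 s) volume 0 (σn n) := by
    apply ContinuousOn.intervalIntegrable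
    rw [Set.uIcc_of_le hσnM.1]; exact hfc.mono hsub1
  have hIf2 : IntervalIntegrable
      (fun s => (Ω^2*r0^2/(2*(1-2*s*r0^2)) - P (s, z)) * eFun r0 s) volume 0 σ := by
    apply ContinuousOn.intervalIntegrable
    rw [Set.uIcc_of_le hσM.1]; exact hfc.mono hsubσ
  have huIccsub : Set.uIcc σ (σn n) ⊆ Set.Icc (0:ℝ) M :=
    Set.uIcc_subset_Icc hσM hσnM
  have hIf3 : IntervalIntegrable
      (fun s => (Ω^2*r0^2/(2*(1-2*s*r0^2)) - P (s, z)) * eFun r0 s) volume σ (σn n) := by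
    apply ContinuousOn.intervalIntegrable
    exact hfc.mono huIccsub
  -- pointwise bound on the difference of integrands
  have hdiff : ∀ s ∈ Set.Icc (0:ℝ) M,
      ‖(Ω^2*r0^2/(2*(1-2*s*r0^2)) - Pn n (s, zn n)) * eFun r0 s
        - (Ω^2*r0^2/(2*(1-2*s*r0^2)) - P (s, z)) * eFun r0 s‖ ≤ 2*ε1*E := by
    intro s hs
    have heq : (Ω^2*r0^2/(2*(1-2*s*r0^2)) - Pn n (s, zn n)) * eFun r0 s
        - (Ω^2*r0^2/(2*(1-2*s*r0^2)) - P (s, z)) * eFun r0 s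
        = (P (s, z) - Pn n (s, zn n)) * eFun r0 s := by ring
    rw [heq, Real.norm_eq_abs, abs_mul]
    have he0 : 0 ≤ eFun r0 s := by unfold eFun; positivity
    have hmem1 : (s, z) ∈ Set.Icc (0:ℝ) (1/(2*r0^2)) ×ˢ Set.Icc (0:ℝ) H :=
      Set.mem_prod.mpr ⟨⟨hs.1, hs.2.trans hM.le⟩, hz⟩
    have hmem2 : (s, zn n) ∈ Set.Icc (0:ℝ) (1/(2*r0^2)) ×ˢ Set.Icc (0:ℝ) H :=
      Set.mem_prod.mpr ⟨⟨hs.1, hs.2.trans hM.le⟩, hwH⟩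
    have hd1 : dist (P (s, z)) (P (s, zn n)) < ε1 := by
      apply hδ (s, z) hmem1 (s, zn n) hmem2
      rw [Prod.dist_eq]
      simp only [dist_self]
      rw [dist_comm z (zn n)]
      exact max_lt hδpos h2
    have hd2 : dist (P (s, zn n)) (Pn n (s, zn n)) < ε1 := h1 (s, zn n) hmem2
    have habs : |P (s, z) - Pn n (s, zn n)| ≤ 2*ε1 := by
      rw [Real.dist_eq] at hd1 hd2
      calc |P (s, z) - Pn n (s, zn n)|
          ≤ |P (s, z) - P (s, zn n)| + |P (s, zn n) - Pn n (s, zn n)| := abs_sub_le _ _ _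
        _ ≤ 2*ε1 := by linarith
    calc |P (s, z) - Pn n (s, zn n)| * |eFun r0 s|
        ≤ (2*ε1) * E := by
          apply mul_le_mul habs _ (abs_nonneg _) (by positivity)
          rw [abs_of_nonneg he0]; exact hEb s hs
      _ = 2*ε1*E := by ring
  -- split the difference
  have hsplit : PiFun r0 Ω (Pn n) (σn n) (zn n) - PiFun r0 Ω P σ z
      = (∫ s in (0:ℝ)..σn n,
          ((Ω^2*r0^2/(2*(1-2*s*r0^2)) - Pn n (s, zn n)) * eFun r0 s
            - (Ω^2*r0^2/(2*(1-2*s*r0^2)) - P (s, z)) * eFun r0 s))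
        + ∫ s in σ..σn n, (Ω^2*r0^2/(2*(1-2*s*r0^2)) - P (s, z)) * eFun r0 s := by
    unfold PiFun
    rw [intervalIntegral.integral_sub hIfn hIf1]
    have hadd := intervalIntegral.integral_add_adjacent_intervals hIf2 hIf3
    linarith
  have hb1 : ‖∫ s in (0:ℝ)..σn n,
      ((Ω^2*r0^2/(2*(1-2*s*r0^2)) - Pn n (s, zn n)) * eFun r0 s
        - (Ω^2*r0^2/(2*(1-2*s*r0^2)) - P (s, z)) * eFun r0 s)‖ ≤ (2*ε1*E) * |σn n - 0| := by
    apply intervalIntegral.norm_integral_le_of_norm_le_const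
    intro x hx
    apply hdiff x
    rw [Set.uIoc_of_le hσnM.1] at hx
    exact ⟨hx.1.le, hx.2.trans hσnM.2⟩
  have hb2 : ‖∫ s in σ..σn n, (Ω^2*r0^2/(2*(1-2*s*r0^2)) - P (s, z)) * eFun r0 s‖
      ≤ K' * |σn n - σ| := by
    apply intervalIntegral.norm_integral_le_of_norm_le_const
    intro x hx
    apply hK'b x
    rcases Set.mem_uIoc.mp hx with ⟨ha, hb⟩ | ⟨ha, hb⟩
    · exact ⟨le_trans hσM.1 ha.le, hb.trans hσnM.2⟩
    · exact ⟨le_trans hσnM.1 ha.le, hb.trans hσM.2⟩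
  -- final arithmetic
  have hA : (2*ε1*E) * |σn n - 0| ≤ ε/2 := by
    have h1' : |σn n - 0| ≤ 1/(2*r0^2) := by
      rw [sub_zero, abs_of_nonneg hσnM.1]; exact le_trans hσnM.2 hM.le
    have h2' : (2*ε1*E) * |σn n - 0| ≤ (2*ε1*E) * (1/(2*r0^2)) :=
      mul_le_mul_of_nonneg_left h1' (by positivity)
    refine le_trans h2' ?_
    rw [hε1def]
    have hX : (0:ℝ) < 4*(1/(2*r0^2))*E+4 := by positivity
    have heq2 : 2*(ε/(4*(1/(2*r0^2))*E+4))*E*(1/(2*r0^2))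
        = (2*E*(1/(2*r0^2))*ε)/(4*(1/(2*r0^2))*E+4) := by ring
    rw [heq2, div_le_div_iff₀ hX two_pos]
    nlinarith [mul_nonneg (mul_nonneg hE0.le hcpos.le) hε.le]
  have hB2 : K' * |σn n - σ| < ε/2 := by
    have h1' : |σn n - σ| < ε/(2*(K'+1)) := by rw [← Real.dist_eq]; exact h3
    have h2' : K' * |σn n - σ| ≤ K' * (ε/(2*(K'+1))) :=
      mul_le_mul_of_nonneg_left h1'.le hK'0
    refine lt_of_le_of_lt h2' ?_
    rw [mul_div_assoc', div_lt_div_iff₀ (by positivity) two_pos]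
    nlinarith
  rw [Real.dist_eq, hsplit]
  rw [Real.norm_eq_abs] at hb1 hb2
  refine lt_of_le_of_lt (le_trans (abs_add_le _ _) (add_le_add hb1 hb2)) ?_
  linarith

/-- stability of minimizers. If `P_n → P` uniformly on `𝒟̄`, `z_n → z` in `[0,H]`,
`ρ_n ∈ Argmin Π_{P_n}(·, z_n)` and `ρ_n → ρ`, then `Π_{P_n}(ρ_n, z_n) → Π_P(ρ, z)` and
`ρ ∈ Argmin Π_P(·, z)`. -/
theorem stmt4 (r0 Ω H A : ℝ) (hr0 : 0 < r0) (hΩ : 0 < Ω) (hH : 0 < H) (hA : 0 ≤ A)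
    (Pn : ℕ → ℝ × ℝ → ℝ) (P : ℝ × ℝ → ℝ)
    (hPnc : ∀ n, ContinuousOn (Pn n)
      (Set.Icc (0 : ℝ) (1 / (2 * r0 ^ 2)) ×ˢ Set.Icc (0 : ℝ) H))
    (hPc : ContinuousOn P (Set.Icc (0 : ℝ) (1 / (2 * r0 ^ 2)) ×ˢ Set.Icc (0 : ℝ) H))
    (hPnb : ∀ n, ∀ s ∈ Set.Icc (0 : ℝ) (1 / (2 * r0 ^ 2)), ∀ z ∈ Set.Icc (0 : ℝ) H,
      Pn n (s, z) ≤ Pn n (0, 0) + A)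
    (hPb : ∀ s ∈ Set.Icc (0 : ℝ) (1 / (2 * r0 ^ 2)), ∀ z ∈ Set.Icc (0 : ℝ) H,
      P (s, z) ≤ P (0, 0) + A)
    (hunif : TendstoUniformlyOn (fun n p => Pn n p) P atTop
      (Set.Icc (0 : ℝ) (1 / (2 * r0 ^ 2)) ×ˢ Set.Icc (0 : ℝ) H))
    (zn : ℕ → ℝ) (z : ℝ) (hzn : ∀ n, zn n ∈ Set.Icc (0 : ℝ) H)
    (hznz : Tendsto zn atTop (nhds z)) (hz : z ∈ Set.Icc (0 : ℝ) H)
    (ρn : ℕ → ℝ) (ρ : ℝ) (hρn : ∀ n, ρn n ∈ ArgminPi r0 Ω (Pn n) (zn n))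
    (hρnρ : Tendsto ρn atTop (nhds ρ)) :
    Tendsto (fun n => PiFun r0 Ω (Pn n) (ρn n) (zn n)) atTop (nhds (PiFun r0 Ω P ρ z)) ∧
    ρ ∈ ArgminPi r0 Ω P z := by
  have hcpos : (0:ℝ) < 1/(2*r0^2) := by positivity
  have h00 : ((0:ℝ),(0:ℝ)) ∈ Set.Icc (0:ℝ) (1/(2*r0^2)) ×ˢ Set.Icc (0:ℝ) H :=
    Set.mem_prod.mpr ⟨⟨le_refl _, hcpos.le⟩, ⟨le_refl _, hH.le⟩⟩
  have htend0 : Tendsto (fun n => Pn n (0,0)) atTop (nhds (P (0,0))) := hunif.tendsto_at h00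
  obtain ⟨C, hC⟩ := htend0.bddAbove_range
  set B := max (C + A) 0 with hBdef
  have hB0 : 0 ≤ B := le_max_right _ _
  have hQB : ∀ n, ∀ x ∈ Set.Icc (0:ℝ) (1/(2*r0^2)) ×ˢ Set.Icc (0:ℝ) H, Pn n x ≤ B := by
    intro n x hx
    obtain ⟨s, z'⟩ := x
    have h1 := hPnb n s hx.1 z' hx.2
    have h2 : Pn n (0,0) ≤ C := hC (Set.mem_range_self n)
    calc Pn n (s, z') ≤ Pn n (0,0) + A := h1
      _ ≤ C + A := by linarith
      _ ≤ B := le_max_left _ _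
  obtain ⟨M, hM0, hMc, hMpos⟩ := exists_M r0 Ω B hr0 hΩ hB0
  have hρnM : ∀ n, ρn n ∈ Set.Icc (0:ℝ) M := by
    intro n
    obtain ⟨⟨hρ0, hρlt⟩, hmin⟩ := hρn n
    refine ⟨hρ0, ?_⟩
    by_contra hgt
    push_neg at hgt
    have hle0 : PiFun r0 Ω (Pn n) (ρn n) (zn n) ≤ 0 := by
      have h01 := hmin 0 ⟨le_refl _, hcpos⟩
      have h0 : PiFun r0 Ω (Pn n) 0 (zn n) = 0 := intervalIntegral.integral_same
      linarith
    have hlow := pi_lower r0 Ω H B hr0 (Pn n) (hPnc n) (zn n) (hzn n) (hQB n) (ρn n) hρ0 hρlt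
    have hpos := hMpos (ρn n) hgt hρlt
    linarith
  have hρM : ρ ∈ Set.Icc (0:ℝ) M :=
    isClosed_Icc.mem_of_tendsto hρnρ (Filter.Eventually.of_forall hρnM)
  have hconv := piTendsto r0 Ω H hr0 hH Pn P hPnc hPc hunif zn z hzn hznz hz M hM0 hMc
    ρn ρ hρnM hρnρ
  refine ⟨hconv, ⟨⟨hρM.1, lt_of_le_of_lt hρM.2 hMc⟩, ?_⟩⟩
  intro ρ' hρ'
  have hconv' := piTendsto r0 Ω H hr0 hH Pn P hPnc hPc hunif zn z hzn hznz hz ρ' hρ'.1 hρ'.2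
    (fun _ => ρ') ρ' (fun n => ⟨hρ'.1, le_refl _⟩) tendsto_const_nhds
  have hle : ∀ n, PiFun r0 Ω (Pn n) (ρn n) (zn n) ≤ PiFun r0 Ω (Pn n) ρ' (zn n) :=
    fun n => (hρn n).2 ρ' hρ'
  exact le_of_tendsto_of_tendsto' hconv hconv' hle
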